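/- Let p_0, p_1, p_2 ∈ [1,∞] with 1/p_0' = 1/p_1 + 1/p_2 − 1 (i.e., the Young functional R(p) = 2 − 1/p_0 − 1/p_1 − 1/p_2 = 0), and let t_0, t_1, t_2 ∈ ℝ satisfy t_j + t_k ≥ 0 for all j ≠ k and t_0 + t_1 + t_2 ≥ 0. Then for f_1 ∈ L^{p_1}_{t_1}(ℝ^d) and f_2 ∈ L^{p_2}_{t_2}(ℝ^d), the convolution f_1 ∗ f_2 belongs to L^{p_0'}_{−t_0}(ℝ^d) and ‖f_1 ∗ f_2‖_{L^{p_0'}_{−t_0}} ≲ ‖f_1‖_{L^{p_1}_{t_1}} ‖f_2‖_{L^{p_2}_{t_2}}. -/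

import Mathlib

open MeasureTheory ENNReal
noncomputable section

def wnorm {d : ℕ} (f : EuclideanSpace ℝ (Fin d) → ℂ) (p : ℝ≥0∞) (t : ℝ) : ℝ≥0∞ :=
  eLpNorm (fun x => ((1 + ‖x‖ ^ 2) ^ (t / 2) : ℝ) • f x) p volume

namespace Stmt10Aux
open Filter
variable {d : ℕ}



/-! ### Real weight inequalities -/

lemma sq_weight_le {d : ℕ} (u v : EuclideanSpace ℝ (Fin d)) :
    1 + ‖u + v‖ ^ 2 ≤ 2 * ((1 + ‖u‖ ^ 2) * (1 + ‖v‖ ^ 2)) := by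
  have h := norm_add_le u v
  have h1 := norm_nonneg u
  have h2 := norm_nonneg v
  have h3 := norm_nonneg (u + v)
  nlinarith [sq_nonneg (‖u‖ - ‖v‖), sq_nonneg (‖u‖ * ‖v‖)]

lemma triple_neg {a b c s₀ s₁ s₂ : ℝ} (ha : 1 ≤ a) (hb : 1 ≤ b) (hc : 1 ≤ c)
    (habc : a ≤ 2 * (b * c)) (hs0 : s₀ ≤ 0) (h01 : 0 ≤ s₀ + s₁) (h02 : 0 ≤ s₀ + s₂) :
    a ^ (-s₀) * b ^ (-s₁) * c ^ (-s₂) ≤ 2 ^ (-s₀) := by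
  have hb0 : (0:ℝ) < b := by linarith
  have hc0 : (0:ℝ) < c := by linarith
  have ha' : a ^ (-s₀) ≤ (2 * (b * c)) ^ (-s₀) :=
    Real.rpow_le_rpow (by linarith) habc (by linarith)
  have h2 : (2 * (b * c)) ^ (-s₀) = 2 ^ (-s₀) * (b ^ (-s₀) * c ^ (-s₀)) := by
    rw [Real.mul_rpow (by norm_num) (by positivity), Real.mul_rpow hb0.le hc0.le]
  have hbb : b ^ (-s₀) * b ^ (-s₁) ≤ 1 := by
    rw [← Real.rpow_add hb0]
    exact Real.rpow_le_one_of_one_le_of_nonpos hb (by linarith)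
  have hcc : c ^ (-s₀) * c ^ (-s₂) ≤ 1 := by
    rw [← Real.rpow_add hc0]
    exact Real.rpow_le_one_of_one_le_of_nonpos hc (by linarith)
  have hpos : ∀ (x : ℝ) (s : ℝ), 0 < x → (0:ℝ) ≤ x ^ s := fun x s hx => (Real.rpow_pos_of_pos hx s).le
  calc a ^ (-s₀) * b ^ (-s₁) * c ^ (-s₂)
      ≤ (2 ^ (-s₀) * (b ^ (-s₀) * c ^ (-s₀))) * b ^ (-s₁) * c ^ (-s₂) := by
        rw [← h2]; gcongr <;> positivity
    _ = 2 ^ (-s₀) * ((b ^ (-s₀) * b ^ (-s₁)) * (c ^ (-s₀) * c ^ (-s₂))) := by ring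
    _ ≤ 2 ^ (-s₀) * (1 * 1) :=
        mul_le_mul_of_nonneg_left (mul_le_mul hbb hcc (by positivity) zero_le_one) (by positivity)
    _ = 2 ^ (-s₀) := by ring

lemma triple {a b c s₀ s₁ s₂ : ℝ} (ha : 1 ≤ a) (hb : 1 ≤ b) (hc : 1 ≤ c)
    (h1 : a ≤ 2 * (b * c)) (h2 : b ≤ 2 * (a * c)) (h3 : c ≤ 2 * (a * b))
    (h01 : 0 ≤ s₀ + s₁) (h02 : 0 ≤ s₀ + s₂) (h12 : 0 ≤ s₁ + s₂) :
    a ^ (-s₀) * b ^ (-s₁) * c ^ (-s₂) ≤ 2 ^ (|s₀| + |s₁| + |s₂|) := by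
  have habs : ∀ s : ℝ, -s ≤ |s₀| + |s₁| + |s₂| → (2:ℝ) ^ (-s) ≤ 2 ^ (|s₀| + |s₁| + |s₂|) :=
    fun s hs => Real.rpow_le_rpow_of_exponent_le one_le_two hs
  have habs0 : -s₀ ≤ |s₀| + |s₁| + |s₂| := by
    have := abs_nonneg s₁; have := abs_nonneg s₂; have := neg_abs_le s₀; linarith
  have habs1 : -s₁ ≤ |s₀| + |s₁| + |s₂| := by
    have := abs_nonneg s₀; have := abs_nonneg s₂; have := neg_abs_le s₁; linarith
  have habs2 : -s₂ ≤ |s₀| + |s₁| + |s₂| := by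
    have := abs_nonneg s₀; have := abs_nonneg s₁; have := neg_abs_le s₂; linarith
  rcases lt_or_ge s₀ 0 with hs0 | hs0
  · exact (triple_neg ha hb hc h1 hs0.le h01 h02).trans (habs _ habs0)
  rcases lt_or_ge s₁ 0 with hs1 | hs1
  · have := triple_neg (s₀ := s₁) (s₁ := s₀) (s₂ := s₂) hb ha hc h2 hs1.le (by linarith) (by linarith)
    calc a ^ (-s₀) * b ^ (-s₁) * c ^ (-s₂) = b ^ (-s₁) * a ^ (-s₀) * c ^ (-s₂) := by ring
      _ ≤ 2 ^ (-s₁) := this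
      _ ≤ _ := habs _ habs1
  rcases lt_or_ge s₂ 0 with hs2 | hs2
  · have := triple_neg (s₀ := s₂) (s₁ := s₀) (s₂ := s₁) hc ha hb h3 hs2.le (by linarith) (by linarith)
    calc a ^ (-s₀) * b ^ (-s₁) * c ^ (-s₂) = c ^ (-s₂) * a ^ (-s₀) * b ^ (-s₁) := by ring
      _ ≤ 2 ^ (-s₂) := this
      _ ≤ _ := habs _ habs2
  · have hA : a ^ (-s₀) ≤ 1 := Real.rpow_le_one_of_one_le_of_nonpos ha (by linarith)
    have hB : b ^ (-s₁) ≤ 1 := Real.rpow_le_one_of_one_le_of_nonpos hb (by linarith)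
    have hC : c ^ (-s₂) ≤ 1 := Real.rpow_le_one_of_one_le_of_nonpos hc (by linarith)
    have h2' : (1:ℝ) ≤ 2 ^ (|s₀| + |s₁| + |s₂|) := by
      apply Real.one_le_rpow one_le_two; positivity
    have hA0 : (0:ℝ) ≤ a ^ (-s₀) := by positivity
    have hB0 : (0:ℝ) ≤ b ^ (-s₁) := by positivity
    have hC0 : (0:ℝ) ≤ c ^ (-s₂) := by positivity
    have hAB : a ^ (-s₀) * b ^ (-s₁) ≤ 1 := by nlinarith
    have hABC : a ^ (-s₀) * b ^ (-s₁) * c ^ (-s₂) ≤ 1 := by nlinarith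
    linarith

lemma weight_ineq {d : ℕ} {t₀ t₁ t₂ : ℝ} (h01 : 0 ≤ t₀ + t₁) (h02 : 0 ≤ t₀ + t₂)
    (h12 : 0 ≤ t₁ + t₂) (x y : EuclideanSpace ℝ (Fin d)) :
    ((1 + ‖x‖ ^ 2) ^ (-t₀ / 2) : ℝ) ≤
      2 ^ ((|t₀| + |t₁| + |t₂|) / 2) *
        ((1 + ‖x - y‖ ^ 2) ^ (t₁ / 2) * (1 + ‖y‖ ^ 2) ^ (t₂ / 2)) := by
  set a : ℝ := 1 + ‖x‖ ^ 2 with ha_def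
  set b : ℝ := 1 + ‖x - y‖ ^ 2 with hb_def
  set c : ℝ := 1 + ‖y‖ ^ 2 with hc_def
  have ha : 1 ≤ a := by have := sq_nonneg ‖x‖; simp only [ha_def]; nlinarith [norm_nonneg x]
  have hb : 1 ≤ b := by simp only [hb_def]; nlinarith [norm_nonneg (x - y)]
  have hc : 1 ≤ c := by simp only [hc_def]; nlinarith [norm_nonneg y]
  have h1 : a ≤ 2 * (b * c) := by
    have := sq_weight_le (x - y) y
    rw [sub_add_cancel] at this
    exact this
  have h2 : b ≤ 2 * (a * c) := by
    have := sq_weight_le x (-y)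
    rw [← sub_eq_add_neg, norm_neg] at this
    exact this
  have h3 : c ≤ 2 * (a * b) := by
    have h' := sq_weight_le x (-(x - y))
    rw [norm_neg] at h'
    have hxy : x + -(x - y) = y := by abel
    rw [hxy] at h'
    exact h'
  have key := triple (s₀ := t₀ / 2) (s₁ := t₁ / 2) (s₂ := t₂ / 2) ha hb hc h1 h2 h3
    (by linarith) (by linarith) (by linarith)
  have habs : |t₀ / 2| + |t₁ / 2| + |t₂ / 2| = (|t₀| + |t₁| + |t₂|) / 2 := by
    rw [abs_div, abs_div, abs_div]
    norm_num
    ring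
  rw [habs] at key
  have hb0 : (0:ℝ) < b := by linarith
  have hc0 : (0:ℝ) < c := by linarith
  have hmul : a ^ (-(t₀ / 2)) =
      (a ^ (-(t₀ / 2)) * b ^ (-(t₁ / 2)) * c ^ (-(t₂ / 2))) * (b ^ (t₁ / 2) * c ^ (t₂ / 2)) := by
    have hbb : b ^ (-(t₁ / 2)) * b ^ (t₁ / 2) = 1 := by
      rw [← Real.rpow_add hb0]; simp
    have hcc : c ^ (-(t₂ / 2)) * c ^ (t₂ / 2) = 1 := by
      rw [← Real.rpow_add hc0]; simp
    calc a ^ (-(t₀ / 2)) = a ^ (-(t₀ / 2)) * ((b ^ (-(t₁ / 2)) * b ^ (t₁ / 2)) *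
          (c ^ (-(t₂ / 2)) * c ^ (t₂ / 2))) := by rw [hbb, hcc]; ring
      _ = _ := by ring
  have hneg : -t₀ / 2 = -(t₀ / 2) := by ring
  rw [hneg, hmul]
  exact mul_le_mul_of_nonneg_right key (by positivity)




def LN (Φ : EuclideanSpace ℝ (Fin d) → ℝ≥0∞) (p : ℝ≥0∞) : ℝ≥0∞ :=
  if p = ∞ then essSup Φ volume else (∫⁻ x, Φ x ^ p.toReal) ^ (1 / p.toReal)

lemma lint_sub_left (Φ : EuclideanSpace ℝ (Fin d) → ℝ≥0∞) (hΦ : AEMeasurable Φ volume)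
    (x : EuclideanSpace ℝ (Fin d)) : ∫⁻ y, Φ (x - y) = ∫⁻ y, Φ y := by
  have h := Measure.measurePreserving_sub_left (volume : Measure (EuclideanSpace ℝ (Fin d))) x
  calc ∫⁻ y, Φ (x - y) = ∫⁻ a, Φ a ∂(Measure.map (fun y => x - y) volume) :=
        (lintegral_map' (by rwa [h.map_eq]) h.measurable.aemeasurable).symm
    _ = ∫⁻ y, Φ y := by rw [h.map_eq]

lemma lint_sub_right (Φ : EuclideanSpace ℝ (Fin d) → ℝ≥0∞) (hΦ : AEMeasurable Φ volume)
    (y : EuclideanSpace ℝ (Fin d)) : ∫⁻ x, Φ (x - y) = ∫⁻ x, Φ x := by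
  have h := measurePreserving_sub_right (volume : Measure (EuclideanSpace ℝ (Fin d))) y
  calc ∫⁻ x, Φ (x - y) = ∫⁻ a, Φ a ∂(Measure.map (fun x => x - y) volume) :=
        (lintegral_map' (by rwa [h.map_eq]) h.measurable.aemeasurable).symm
    _ = ∫⁻ x, Φ x := by rw [h.map_eq]

set_option maxHeartbeats 2000000 in
lemma young (F G : EuclideanSpace ℝ (Fin d) → ℝ≥0∞) (hF : AEMeasurable F volume)
    (hG : AEMeasurable G volume) {p q r : ℝ≥0∞} (hp : 1 ≤ p) (hq : 1 ≤ q)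
    (hpqr : 1 / p + 1 / q = 1 + 1 / r) :
    LN (fun x => ∫⁻ y, F (x - y) * G y) r ≤ LN F p * LN G q := by
  have hp0 : p ≠ 0 := (zero_lt_one.trans_le hp).ne'
  have hq0 : q ≠ 0 := (zero_lt_one.trans_le hq).ne'
  have hpinv1 : 1 / p ≤ 1 := by rw [one_div]; exact ENNReal.inv_le_one.mpr hp
  have hqinv1 : 1 / q ≤ 1 := by rw [one_div]; exact ENNReal.inv_le_one.mpr hq
  have hFx : ∀ x, AEMeasurable (fun y => F (x - y)) volume := fun x =>
    hF.comp_quasiMeasurePreserving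
      (Measure.measurePreserving_sub_left volume x).quasiMeasurePreserving
  rcases eq_or_ne r ∞ with rfl | hrt
  · -- r = ∞ : then 1/p + 1/q = 1
    have hpq1 : 1 / p + 1 / q = 1 := by simpa using hpqr
    rcases eq_or_ne p ∞ with rfl | hpt
    · -- q = 1
      have hq1 : q = 1 := by
        have h1 : 1 / q = 1 := by simpa using hpq1
        rw [one_div] at h1
        simpa [ENNReal.inv_eq_one] using h1
      subst hq1
      have hbound : ∀ x, (∫⁻ y, F (x - y) * G y) ≤ essSup F volume * ∫⁻ y, G y := by
        intro x
        have hae : ∀ᵐ y ∂(volume : Measure (EuclideanSpace ℝ (Fin d))),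
            F (x - y) ≤ essSup F volume :=
          (Measure.measurePreserving_sub_left volume x).quasiMeasurePreserving.ae ae_le_essSup
        calc (∫⁻ y, F (x - y) * G y) ≤ ∫⁻ y, essSup F volume * G y :=
              lintegral_mono_ae (hae.mono fun y hy => mul_le_mul_left hy _)
          _ = essSup F volume * ∫⁻ y, G y := lintegral_const_mul'' _ hG
      have h2 : LN (fun x => ∫⁻ y, F (x - y) * G y) ∞ ≤ essSup F volume * ∫⁻ y, G y := by
        simp only [LN, if_pos rfl]
        exact essSup_le_of_ae_le _ (Eventually.of_forall hbound)
      refine h2.trans (le_of_eq ?_)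
      simp [LN]
    · rcases eq_or_ne q ∞ with rfl | hqt
      · -- p = 1
        have hp1 : p = 1 := by
          have h1 : 1 / p = 1 := by simpa using hpq1
          rw [one_div] at h1
          simpa [ENNReal.inv_eq_one] using h1
        subst hp1
        have hbound : ∀ x, (∫⁻ y, F (x - y) * G y) ≤ (∫⁻ z, F z) * essSup G volume := by
          intro x
          calc (∫⁻ y, F (x - y) * G y) ≤ ∫⁻ y, F (x - y) * essSup G volume :=
                lintegral_mono_ae ((ENNReal.ae_le_essSup (μ := volume) G).mono fun y hy => mul_le_mul_right hy _)
            _ = (∫⁻ y, F (x - y)) * essSup G volume := lintegral_mul_const'' _ (hFx x)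
            _ = (∫⁻ z, F z) * essSup G volume := by rw [lint_sub_left F hF x]
        have h2 : LN (fun x => ∫⁻ y, F (x - y) * G y) ∞ ≤ (∫⁻ z, F z) * essSup G volume := by
          simp only [LN, if_pos rfl]
          exact essSup_le_of_ae_le _ (Eventually.of_forall hbound)
        refine h2.trans (le_of_eq ?_)
        simp [LN]
      · -- both finite, conjugate
        have hpr1 : 1 ≤ p.toReal := by rw [← ENNReal.toReal_one]; exact ENNReal.toReal_mono hpt hp
        have hqr1 : 1 ≤ q.toReal := by rw [← ENNReal.toReal_one]; exact ENNReal.toReal_mono hqt hq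
        have hpr0 : (0:ℝ) < p.toReal := zero_lt_one.trans_le hpr1
        have hqr0 : (0:ℝ) < q.toReal := zero_lt_one.trans_le hqr1
        have hsum : 1 / p.toReal + 1 / q.toReal = 1 := by
          have h1 := congrArg ENNReal.toReal hpq1
          rw [ENNReal.toReal_add (by rw [one_div]; exact ENNReal.inv_ne_top.mpr hp0)
            (by rw [one_div]; exact ENNReal.inv_ne_top.mpr hq0), one_div, one_div,
            ENNReal.toReal_inv, ENNReal.toReal_inv, ENNReal.toReal_one] at h1
          simpa [one_div] using h1
        have hbound : ∀ x, (∫⁻ y, F (x - y) * G y) ≤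
            (∫⁻ z, F z ^ p.toReal) ^ (1 / p.toReal) * (∫⁻ z, G z ^ q.toReal) ^ (1 / q.toReal) := by
          intro x
          have hEq : ∀ y, F (x - y) * G y =
              (F (x - y) ^ p.toReal) ^ (1 / p.toReal) * (G y ^ q.toReal) ^ (1 / q.toReal) := by
            intro y
            rw [← ENNReal.rpow_mul, ← ENNReal.rpow_mul, mul_one_div_cancel hpr0.ne',
              mul_one_div_cancel hqr0.ne', ENNReal.rpow_one, ENNReal.rpow_one]
          calc (∫⁻ y, F (x - y) * G y)
              = ∫⁻ y, (F (x - y) ^ p.toReal) ^ (1 / p.toReal) *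
                  (G y ^ q.toReal) ^ (1 / q.toReal) := by simp only [hEq]
            _ ≤ (∫⁻ y, F (x - y) ^ p.toReal) ^ (1 / p.toReal) *
                  (∫⁻ y, G y ^ q.toReal) ^ (1 / q.toReal) :=
                ENNReal.lintegral_mul_norm_pow_le ((hFx x).pow_const _) (hG.pow_const _)
                  (by positivity) (by positivity) hsum
            _ = _ := by rw [lint_sub_left (fun z => F z ^ p.toReal) (hF.pow_const _) x]
        have h2 : LN (fun x => ∫⁻ y, F (x - y) * G y) ∞ ≤
            (∫⁻ z, F z ^ p.toReal) ^ (1 / p.toReal) * (∫⁻ z, G z ^ q.toReal) ^ (1 / q.toReal) := by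
          simp only [LN, if_pos rfl]
          exact essSup_le_of_ae_le _ (Eventually.of_forall hbound)
        refine h2.trans (le_of_eq ?_)
        simp [LN, hpt, hqt]
  · -- r finite
    have hrinv0 : (1:ℝ≥0∞) / r ≠ 0 := by rw [one_div]; exact ENNReal.inv_ne_zero.mpr hrt
    have hlt : (1:ℝ≥0∞) < 1 + 1 / r := ENNReal.lt_add_right one_ne_top hrinv0
    have hr1 : 1 ≤ r := by
      have h2 : 1 / p + 1 / q ≤ 1 + 1 := add_le_add hpinv1 hqinv1
      rw [hpqr] at h2
      have h3 := (ENNReal.add_le_add_iff_left one_ne_top).mp h2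
      rwa [one_div, ENNReal.inv_le_one] at h3
    have hr0 : r ≠ 0 := (zero_lt_one.trans_le hr1).ne'
    have hpt : p ≠ ∞ := by
      intro h; subst h
      have h1 : 1 / q = 1 + 1 / r := by simpa using hpqr
      exact absurd (h1 ▸ hqinv1) (not_le.mpr hlt)
    have hqt : q ≠ ∞ := by
      intro h; subst h
      have h1 : 1 / p = 1 + 1 / r := by simpa using hpqr
      exact absurd (h1 ▸ hpinv1) (not_le.mpr hlt)
    have hpr1 : 1 ≤ p.toReal := by rw [← ENNReal.toReal_one]; exact ENNReal.toReal_mono hpt hp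
    have hqr1 : 1 ≤ q.toReal := by rw [← ENNReal.toReal_one]; exact ENNReal.toReal_mono hqt hq
    have hrr1 : 1 ≤ r.toReal := by rw [← ENNReal.toReal_one]; exact ENNReal.toReal_mono hrt hr1
    have hpr0 : (0:ℝ) < p.toReal := zero_lt_one.trans_le hpr1
    have hqr0 : (0:ℝ) < q.toReal := zero_lt_one.trans_le hqr1
    have hrr0 : (0:ℝ) < r.toReal := zero_lt_one.trans_le hrr1
    have hrel : 1 / p.toReal + 1 / q.toReal = 1 + 1 / r.toReal := by
      have h1 := congrArg ENNReal.toReal hpqr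
      rw [ENNReal.toReal_add (by rw [one_div]; exact ENNReal.inv_ne_top.mpr hp0)
          (by rw [one_div]; exact ENNReal.inv_ne_top.mpr hq0),
        ENNReal.toReal_add one_ne_top (by rw [one_div]; exact ENNReal.inv_ne_top.mpr hr0),
        one_div, one_div, one_div, ENNReal.toReal_inv, ENNReal.toReal_inv, ENNReal.toReal_inv,
        ENNReal.toReal_one] at h1
      simpa [one_div] using h1
    have hα : (0:ℝ) ≤ 1 / p.toReal - 1 / r.toReal := by
      have : 1 / q.toReal ≤ 1 := (div_le_one hqr0).mpr hqr1
      linarith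
    have hβ : (0:ℝ) ≤ 1 / q.toReal - 1 / r.toReal := by
      have : 1 / p.toReal ≤ 1 := (div_le_one hpr0).mpr hpr1
      linarith
    -- special degenerate cases
    by_cases hIA0 : (∫⁻ z, F z ^ p.toReal) = 0
    · have hF0 : ∀ᵐ z ∂(volume : Measure (EuclideanSpace ℝ (Fin d))), F z = 0 := by
        have h1 := (lintegral_eq_zero_iff' (hF.pow_const p.toReal)).mp hIA0
        filter_upwards [h1] with z hz
        have hz' : F z ^ p.toReal = 0 := hz
        rcases ENNReal.rpow_eq_zero_iff.mp hz' with ⟨h2, _⟩ | ⟨_, h2⟩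
        · exact h2
        · linarith
      have hzero : ∀ x, (∫⁻ y, F (x - y) * G y) = 0 := by
        intro x
        have hae : ∀ᵐ y ∂(volume : Measure (EuclideanSpace ℝ (Fin d))), F (x - y) = 0 :=
          (Measure.measurePreserving_sub_left volume x).quasiMeasurePreserving.ae hF0
        rw [show (∫⁻ y, F (x - y) * G y) = ∫⁻ _, (0:ℝ≥0∞) from
          lintegral_congr_ae (hae.mono fun y hy => by simp [hy]), lintegral_zero]
      have hL : LN (fun x => ∫⁻ y, F (x - y) * G y) r = 0 := by
        simp only [LN, if_neg hrt]
        rw [show (∫⁻ x, (∫⁻ y, F (x - y) * G y) ^ r.toReal) = 0 by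
          simp [hzero, ENNReal.zero_rpow_of_pos hrr0]]
        exact ENNReal.zero_rpow_of_pos (by positivity)
      rw [hL]; exact zero_le
    by_cases hIB0 : (∫⁻ z, G z ^ q.toReal) = 0
    · have hG0 : ∀ᵐ z ∂(volume : Measure (EuclideanSpace ℝ (Fin d))), G z = 0 := by
        have h1 := (lintegral_eq_zero_iff' (hG.pow_const q.toReal)).mp hIB0
        filter_upwards [h1] with z hz
        have hz' : G z ^ q.toReal = 0 := hz
        rcases ENNReal.rpow_eq_zero_iff.mp hz' with ⟨h2, _⟩ | ⟨_, h2⟩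
        · exact h2
        · linarith
      have hzero : ∀ x, (∫⁻ y, F (x - y) * G y) = 0 := by
        intro x
        rw [show (∫⁻ y, F (x - y) * G y) = ∫⁻ _, (0:ℝ≥0∞) from
          lintegral_congr_ae (hG0.mono fun y hy => by simp [hy]), lintegral_zero]
      have hL : LN (fun x => ∫⁻ y, F (x - y) * G y) r = 0 := by
        simp only [LN, if_neg hrt]
        rw [show (∫⁻ x, (∫⁻ y, F (x - y) * G y) ^ r.toReal) = 0 by
          simp [hzero, ENNReal.zero_rpow_of_pos hrr0]]
        exact ENNReal.zero_rpow_of_pos (by positivity)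
      rw [hL]; exact zero_le
    by_cases hIAt : (∫⁻ z, F z ^ p.toReal) = ∞
    · have hR : LN F p * LN G q = ∞ := by
        simp only [LN, if_neg hpt, if_neg hqt]
        rw [hIAt, ENNReal.top_rpow_of_pos (by positivity), ENNReal.top_mul]
        simp only [ne_eq, ENNReal.rpow_eq_zero_iff, not_or, not_and]
        constructor
        · intro h; exact absurd h hIB0
        · intro _; exact not_lt.mpr (by positivity)
      rw [hR]; exact le_top
    by_cases hIBt : (∫⁻ z, G z ^ q.toReal) = ∞
    · have hR : LN F p * LN G q = ∞ := by
        simp only [LN, if_neg hpt, if_neg hqt]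
        rw [hIBt, ENNReal.top_rpow_of_pos (by positivity), ENNReal.mul_top]
        simp only [ne_eq, ENNReal.rpow_eq_zero_iff, not_or, not_and]
        constructor
        · intro h; exact absurd h hIA0
        · intro _; exact not_lt.mpr (by positivity)
      rw [hR]; exact le_top
    -- main case
    have hrr_ne : r.toReal ≠ 0 := hrr0.ne'
    have hinner : ∀ x, (∫⁻ y, F (x - y) * G y) ≤
        (∫⁻ y, F (x - y) ^ p.toReal * G y ^ q.toReal) ^ (1 / r.toReal) *
          ((∫⁻ z, F z ^ p.toReal) ^ (1 / p.toReal - 1 / r.toReal) *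
            (∫⁻ z, G z ^ q.toReal) ^ (1 / q.toReal - 1 / r.toReal)) := by
      intro x
      have hEq : ∀ y, F (x - y) * G y =
          (F (x - y) ^ p.toReal * G y ^ q.toReal) ^ (1 / r.toReal) *
            ((F (x - y) ^ p.toReal) ^ (1 / p.toReal - 1 / r.toReal) *
              (G y ^ q.toReal) ^ (1 / q.toReal - 1 / r.toReal)) := by
        intro y
        rw [ENNReal.mul_rpow_of_nonneg _ _ (by positivity : (0:ℝ) ≤ 1 / r.toReal)]
        rw [show (F (x - y) ^ p.toReal) ^ (1 / r.toReal) * (G y ^ q.toReal) ^ (1 / r.toReal) *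
              ((F (x - y) ^ p.toReal) ^ (1 / p.toReal - 1 / r.toReal) *
                (G y ^ q.toReal) ^ (1 / q.toReal - 1 / r.toReal)) =
            ((F (x - y) ^ p.toReal) ^ (1 / r.toReal) *
              (F (x - y) ^ p.toReal) ^ (1 / p.toReal - 1 / r.toReal)) *
            ((G y ^ q.toReal) ^ (1 / r.toReal) *
              (G y ^ q.toReal) ^ (1 / q.toReal - 1 / r.toReal)) from by ring]
        rw [← ENNReal.rpow_add_of_nonneg _ _ (by positivity) hα,
          ← ENNReal.rpow_add_of_nonneg _ _ (by positivity) hβ,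
          show 1 / r.toReal + (1 / p.toReal - 1 / r.toReal) = 1 / p.toReal from by ring,
          show 1 / r.toReal + (1 / q.toReal - 1 / r.toReal) = 1 / q.toReal from by ring,
          ← ENNReal.rpow_mul, ← ENNReal.rpow_mul, mul_one_div_cancel hpr0.ne',
          mul_one_div_cancel hqr0.ne', ENNReal.rpow_one, ENNReal.rpow_one]
      calc (∫⁻ y, F (x - y) * G y)
          = ∫⁻ y, (F (x - y) ^ p.toReal * G y ^ q.toReal) ^ (1 / r.toReal) *
              ((F (x - y) ^ p.toReal) ^ (1 / p.toReal - 1 / r.toReal) *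
                (G y ^ q.toReal) ^ (1 / q.toReal - 1 / r.toReal)) := by simp only [hEq]
        _ ≤ (∫⁻ y, F (x - y) ^ p.toReal * G y ^ q.toReal) ^ (1 / r.toReal) *
              ((∫⁻ y, F (x - y) ^ p.toReal) ^ (1 / p.toReal - 1 / r.toReal) *
                (∫⁻ y, G y ^ q.toReal) ^ (1 / q.toReal - 1 / r.toReal)) := by
            have h3 := ENNReal.lintegral_mul_prod_norm_pow_le (μ := volume) Finset.univ
              (g := fun y => F (x - y) ^ p.toReal * G y ^ q.toReal)
              (f := ![fun y => F (x - y) ^ p.toReal, fun y => G y ^ q.toReal])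
              (((hFx x).pow_const _).mul (hG.pow_const _))
              (fun i _ => by fin_cases i
                             · exact (hFx x).pow_const _
                             · exact hG.pow_const _)
              (1 / r.toReal)
              (p := ![1 / p.toReal - 1 / r.toReal, 1 / q.toReal - 1 / r.toReal])
              (by simp only [Fin.sum_univ_two, Matrix.cons_val_zero, Matrix.cons_val_one,
                    Matrix.head_cons]
                  linarith)
              (by positivity)
              (fun i _ => by fin_cases i
                             · exact hα
                             · exact hβ)
            simpa only [Fin.prod_univ_two, Matrix.cons_val_zero, Matrix.cons_val_one,
              Matrix.head_cons] using h3
        _ = _ := by rw [lint_sub_left (fun z => F z ^ p.toReal) (hF.pow_const _) x]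
    have hprod : AEMeasurable
        (fun z : EuclideanSpace ℝ (Fin d) × EuclideanSpace ℝ (Fin d) =>
          F (z.1 - z.2) ^ p.toReal * G z.2 ^ q.toReal)
        ((volume : Measure (EuclideanSpace ℝ (Fin d))).prod volume) := by
      have h0 : AEMeasurable
          (fun z : EuclideanSpace ℝ (Fin d) × EuclideanSpace ℝ (Fin d) =>
            F z.1 ^ p.toReal * G z.2 ^ q.toReal)
          ((volume : Measure (EuclideanSpace ℝ (Fin d))).prod volume) :=
        (AEMeasurable.comp_fst (ν := volume) (hF.pow_const _)).mul
          (AEMeasurable.comp_snd (μ := volume) (hG.pow_const _))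
      exact h0.comp_quasiMeasurePreserving
        (measurePreserving_sub_prod (volume : Measure (EuclideanSpace ℝ (Fin d)))
          volume).quasiMeasurePreserving
    have hTonelli : (∫⁻ x, ∫⁻ y, F (x - y) ^ p.toReal * G y ^ q.toReal) =
        (∫⁻ z, F z ^ p.toReal) * ∫⁻ z, G z ^ q.toReal := by
      rw [lintegral_lintegral_swap hprod]
      have h1 : ∀ y, (∫⁻ x, F (x - y) ^ p.toReal * G y ^ q.toReal) =
          (∫⁻ z, F z ^ p.toReal) * G y ^ q.toReal := by
        intro y
        have hFy : AEMeasurable (fun x => F (x - y) ^ p.toReal) volume :=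
          (hF.comp_quasiMeasurePreserving
            (measurePreserving_sub_right volume y).quasiMeasurePreserving).pow_const _
        rw [lintegral_mul_const'' _ hFy,
          lint_sub_right (fun z => F z ^ p.toReal) (hF.pow_const _) y]
      simp only [h1]
      rw [lintegral_const_mul' _ _ hIAt]
    have hc_ne : ((∫⁻ z, F z ^ p.toReal) ^ (1 / p.toReal - 1 / r.toReal) *
        (∫⁻ z, G z ^ q.toReal) ^ (1 / q.toReal - 1 / r.toReal)) ^ r.toReal ≠ ∞ :=
      ENNReal.rpow_ne_top_of_nonneg hrr0.le
        (ENNReal.mul_ne_top (ENNReal.rpow_ne_top_of_nonneg hα hIAt)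
          (ENNReal.rpow_ne_top_of_nonneg hβ hIBt))
    have houter : (∫⁻ x, (∫⁻ y, F (x - y) * G y) ^ r.toReal) ≤
        ((∫⁻ z, F z ^ p.toReal) * ∫⁻ z, G z ^ q.toReal) *
          (((∫⁻ z, F z ^ p.toReal) ^ (1 / p.toReal - 1 / r.toReal) *
            (∫⁻ z, G z ^ q.toReal) ^ (1 / q.toReal - 1 / r.toReal)) ^ r.toReal) := by
      calc (∫⁻ x, (∫⁻ y, F (x - y) * G y) ^ r.toReal)
          ≤ ∫⁻ x, (∫⁻ y, F (x - y) ^ p.toReal * G y ^ q.toReal) *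
              (((∫⁻ z, F z ^ p.toReal) ^ (1 / p.toReal - 1 / r.toReal) *
                (∫⁻ z, G z ^ q.toReal) ^ (1 / q.toReal - 1 / r.toReal)) ^ r.toReal) := by
            apply lintegral_mono
            intro x
            calc (∫⁻ y, F (x - y) * G y) ^ r.toReal
                ≤ ((∫⁻ y, F (x - y) ^ p.toReal * G y ^ q.toReal) ^ (1 / r.toReal) *
                    ((∫⁻ z, F z ^ p.toReal) ^ (1 / p.toReal - 1 / r.toReal) *
                      (∫⁻ z, G z ^ q.toReal) ^ (1 / q.toReal - 1 / r.toReal))) ^ r.toReal :=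
                  ENNReal.rpow_le_rpow (hinner x) hrr0.le
              _ = _ := by
                  rw [ENNReal.mul_rpow_of_nonneg _ _ hrr0.le, ← ENNReal.rpow_mul,
                    one_div_mul_cancel hrr_ne, ENNReal.rpow_one]
        _ = (∫⁻ x, ∫⁻ y, F (x - y) ^ p.toReal * G y ^ q.toReal) *
              (((∫⁻ z, F z ^ p.toReal) ^ (1 / p.toReal - 1 / r.toReal) *
                (∫⁻ z, G z ^ q.toReal) ^ (1 / q.toReal - 1 / r.toReal)) ^ r.toReal) :=
            lintegral_mul_const' _ _ hc_ne
        _ = _ := by rw [hTonelli]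
    simp only [LN, if_neg hrt, if_neg hpt, if_neg hqt]
    calc (∫⁻ x, (∫⁻ y, F (x - y) * G y) ^ r.toReal) ^ (1 / r.toReal)
        ≤ (((∫⁻ z, F z ^ p.toReal) * ∫⁻ z, G z ^ q.toReal) *
            (((∫⁻ z, F z ^ p.toReal) ^ (1 / p.toReal - 1 / r.toReal) *
              (∫⁻ z, G z ^ q.toReal) ^ (1 / q.toReal - 1 / r.toReal)) ^ r.toReal)) ^
            (1 / r.toReal) := ENNReal.rpow_le_rpow houter (by positivity)
      _ = (∫⁻ z, F z ^ p.toReal) ^ (1 / p.toReal) * (∫⁻ z, G z ^ q.toReal) ^ (1 / q.toReal) := by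
          rw [ENNReal.mul_rpow_of_nonneg _ _ (by positivity : (0:ℝ) ≤ 1 / r.toReal),
            ENNReal.mul_rpow_of_nonneg _ _ (by positivity : (0:ℝ) ≤ 1 / r.toReal),
            ← ENNReal.rpow_mul
              ((∫⁻ z, F z ^ p.toReal) ^ (1 / p.toReal - 1 / r.toReal) *
                (∫⁻ z, G z ^ q.toReal) ^ (1 / q.toReal - 1 / r.toReal)),
            mul_one_div_cancel hrr_ne, ENNReal.rpow_one,
            show ((∫⁻ z, F z ^ p.toReal) ^ (1 / r.toReal) *
                (∫⁻ z, G z ^ q.toReal) ^ (1 / r.toReal)) *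
                ((∫⁻ z, F z ^ p.toReal) ^ (1 / p.toReal - 1 / r.toReal) *
                  (∫⁻ z, G z ^ q.toReal) ^ (1 / q.toReal - 1 / r.toReal)) =
              ((∫⁻ z, F z ^ p.toReal) ^ (1 / r.toReal) *
                (∫⁻ z, F z ^ p.toReal) ^ (1 / p.toReal - 1 / r.toReal)) *
              ((∫⁻ z, G z ^ q.toReal) ^ (1 / r.toReal) *
                (∫⁻ z, G z ^ q.toReal) ^ (1 / q.toReal - 1 / r.toReal)) from by ring,
            ← ENNReal.rpow_add_of_nonneg _ _ (by positivity) hα,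
            ← ENNReal.rpow_add_of_nonneg _ _ (by positivity) hβ,
            show 1 / r.toReal + (1 / p.toReal - 1 / r.toReal) = 1 / p.toReal from by ring,
            show 1 / r.toReal + (1 / q.toReal - 1 / r.toReal) = 1 / q.toReal from by ring]


lemma LN_mono {Φ Ψ : EuclideanSpace ℝ (Fin d) → ℝ≥0∞} (h : ∀ x, Φ x ≤ Ψ x) (p : ℝ≥0∞) :
    LN Φ p ≤ LN Ψ p := by
  rcases eq_or_ne p ∞ with rfl | hpt
  · simpa [LN] using essSup_mono_ae (μ := (volume : Measure (EuclideanSpace ℝ (Fin d))))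
      (Eventually.of_forall h)
  · simp only [LN, if_neg hpt]
    exact ENNReal.rpow_le_rpow
      (lintegral_mono fun x => ENNReal.rpow_le_rpow (h x) ENNReal.toReal_nonneg)
      (by positivity)

lemma LN_nnnorm (h : EuclideanSpace ℝ (Fin d) → ℂ) {p : ℝ≥0∞} (hp : p ≠ 0) :
    LN (fun x => (‖h x‖₊ : ℝ≥0∞)) p = eLpNorm h p volume := by
  rcases eq_or_ne p ∞ with rfl | hpt
  · simp [LN, eLpNorm, eLpNormEssSup]; rfl
  · rw [eLpNorm_eq_lintegral_rpow_enorm_toReal hp hpt]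
    simp [LN, hpt]; rfl

lemma LN_const_mul (Φ : EuclideanSpace ℝ (Fin d) → ℝ≥0∞) {C : ℝ≥0∞} (hC : C ≠ ∞) {p : ℝ≥0∞}
    (hp : p ≠ 0) : LN (fun x => C * Φ x) p = C * LN Φ p := by
  rcases eq_or_ne p ∞ with rfl | hpt
  · simp [LN, ENNReal.essSup_const_mul]
  · have hpr : p.toReal ≠ 0 := ENNReal.toReal_ne_zero.mpr ⟨hp, hpt⟩
    have hpr0 : (0:ℝ) ≤ p.toReal := ENNReal.toReal_nonneg
    simp only [LN, if_neg hpt]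
    have h1 : ∀ x, (C * Φ x) ^ p.toReal = C ^ p.toReal * Φ x ^ p.toReal := fun x =>
      ENNReal.mul_rpow_of_nonneg _ _ hpr0
    simp only [h1]
    rw [lintegral_const_mul' _ _ (ENNReal.rpow_ne_top_of_nonneg hpr0 hC),
      ENNReal.mul_rpow_of_nonneg _ _ (by positivity : (0:ℝ) ≤ 1 / p.toReal),
      ← ENNReal.rpow_mul, mul_one_div_cancel hpr, ENNReal.rpow_one]


end Stmt10Aux

open Stmt10Aux Filter in
theorem stmt10 {d : ℕ} (p₀ p₀' p₁ p₂ : ℝ≥0∞) (t₀ t₁ t₂ : ℝ)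
    (hp₀ : 1 ≤ p₀) (hp₁ : 1 ≤ p₁) (hp₂ : 1 ≤ p₂)
    (hconj : 1 / p₀ + 1 / p₀' = 1)
    (hR : 1 / p₁ + 1 / p₂ = 1 + 1 / p₀')
    (ht01 : 0 ≤ t₀ + t₁) (ht02 : 0 ≤ t₀ + t₂) (ht12 : 0 ≤ t₁ + t₂)
    (ht : 0 ≤ t₀ + t₁ + t₂) :
    ∃ C : ℝ≥0∞, 0 < C ∧ C < ⊤ ∧
      ∀ f₁ f₂ : EuclideanSpace ℝ (Fin d) → ℂ,
        AEStronglyMeasurable f₁ volume → AEStronglyMeasurable f₂ volume →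
        wnorm f₁ p₁ t₁ < ⊤ → wnorm f₂ p₂ t₂ < ⊤ →
        wnorm (fun x => ∫ y, f₁ (x - y) * f₂ y) p₀' (-t₀) ≤ C * (wnorm f₁ p₁ t₁ * wnorm f₂ p₂ t₂) := by
  have hK : (0:ℝ) < 2 ^ ((|t₀| + |t₁| + |t₂|) / 2) := Real.rpow_pos_of_pos two_pos _
  refine ⟨ENNReal.ofReal (2 ^ ((|t₀| + |t₁| + |t₂|) / 2)), ENNReal.ofReal_pos.mpr hK,
    ENNReal.ofReal_lt_top, ?_⟩
  set C : ℝ≥0∞ := ENNReal.ofReal (2 ^ ((|t₀| + |t₁| + |t₂|) / 2)) with hC_def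
  have hC_ne : C ≠ ∞ := ENNReal.ofReal_ne_top
  intro f₁ f₂ hm₁ hm₂ _ _
  have hp₀'1 : 1 ≤ p₀' := by
    have h1 : 1 / p₀' ≤ 1 := by
      calc 1 / p₀' ≤ 1 / p₀ + 1 / p₀' := le_add_self
        _ = 1 := hconj
    rwa [one_div, ENNReal.inv_le_one] at h1
  have hp₀'0 : p₀' ≠ 0 := (zero_lt_one.trans_le hp₀'1).ne'
  have hp₁0 : p₁ ≠ 0 := (zero_lt_one.trans_le hp₁).ne'
  have hp₂0 : p₂ ≠ 0 := (zero_lt_one.trans_le hp₂).ne'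
  have hw_cont : ∀ t : ℝ, Continuous (fun x : EuclideanSpace ℝ (Fin d) =>
      ((1 + ‖x‖ ^ 2) ^ (t / 2) : ℝ)) := by
    intro t
    apply Continuous.rpow_const
    · exact continuous_const.add ((continuous_norm).pow 2)
    · intro x
      left
      positivity
  have hw_pos : ∀ (t : ℝ) (x : EuclideanSpace ℝ (Fin d)), (0:ℝ) < (1 + ‖x‖ ^ 2) ^ (t / 2) := by
    intro t x
    positivity
  have hWt : ∀ (t : ℝ) (z : EuclideanSpace ℝ (Fin d)),
      (‖((1 + ‖z‖ ^ 2) ^ (t / 2) : ℝ)‖₊ : ℝ≥0∞) =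
        ENNReal.ofReal ((1 + ‖z‖ ^ 2) ^ (t / 2)) := fun t z =>
    Real.enorm_eq_ofReal (hw_pos t z).le
  set g₁ : EuclideanSpace ℝ (Fin d) → ℂ := fun x => ((1 + ‖x‖ ^ 2) ^ (t₁ / 2) : ℝ) • f₁ x
    with hg₁_def
  set g₂ : EuclideanSpace ℝ (Fin d) → ℂ := fun x => ((1 + ‖x‖ ^ 2) ^ (t₂ / 2) : ℝ) • f₂ x
    with hg₂_def
  have hg₁m : AEStronglyMeasurable g₁ volume := ((hw_cont t₁).aestronglyMeasurable).smul hm₁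
  have hg₂m : AEStronglyMeasurable g₂ volume := ((hw_cont t₂).aestronglyMeasurable).smul hm₂
  set F : EuclideanSpace ℝ (Fin d) → ℝ≥0∞ := fun x => (‖g₁ x‖₊ : ℝ≥0∞) with hF_def
  set G : EuclideanSpace ℝ (Fin d) → ℝ≥0∞ := fun x => (‖g₂ x‖₊ : ℝ≥0∞) with hG_def
  have hFm : AEMeasurable F volume := hg₁m.enorm
  have hGm : AEMeasurable G volume := hg₂m.enorm
  have hFval : ∀ z, F z = ENNReal.ofReal ((1 + ‖z‖ ^ 2) ^ (t₁ / 2)) * (‖f₁ z‖₊ : ℝ≥0∞) := by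
    intro z
    simp only [hF_def, hg₁_def]
    rw [nnnorm_smul, ENNReal.coe_mul, hWt]
  have hGval : ∀ z, G z = ENNReal.ofReal ((1 + ‖z‖ ^ 2) ^ (t₂ / 2)) * (‖f₂ z‖₊ : ℝ≥0∞) := by
    intro z
    simp only [hG_def, hg₂_def]
    rw [nnnorm_smul, ENNReal.coe_mul, hWt]
  have hpoint : ∀ x, (‖((1 + ‖x‖ ^ 2) ^ (-t₀ / 2) : ℝ) • (∫ y, f₁ (x - y) * f₂ y)‖₊ : ℝ≥0∞) ≤
      C * ∫⁻ y, F (x - y) * G y := by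
    intro x
    calc (‖((1 + ‖x‖ ^ 2) ^ (-t₀ / 2) : ℝ) • (∫ y, f₁ (x - y) * f₂ y)‖₊ : ℝ≥0∞)
        = ENNReal.ofReal ((1 + ‖x‖ ^ 2) ^ (-t₀ / 2)) * (‖∫ y, f₁ (x - y) * f₂ y‖₊ : ℝ≥0∞) := by
          rw [nnnorm_smul, ENNReal.coe_mul, hWt]
      _ ≤ ENNReal.ofReal ((1 + ‖x‖ ^ 2) ^ (-t₀ / 2)) *
            ∫⁻ y, (‖f₁ (x - y) * f₂ y‖₊ : ℝ≥0∞) :=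
          mul_le_mul_right (enorm_integral_le_lintegral_enorm _) _
      _ = ∫⁻ y, ENNReal.ofReal ((1 + ‖x‖ ^ 2) ^ (-t₀ / 2)) *
            ((‖f₁ (x - y)‖₊ : ℝ≥0∞) * (‖f₂ y‖₊ : ℝ≥0∞)) := by
          rw [← lintegral_const_mul' _ _ ENNReal.ofReal_ne_top]
          congr 1
          funext y
          rw [nnnorm_mul, ENNReal.coe_mul]
      _ ≤ ∫⁻ y, (C * (ENNReal.ofReal ((1 + ‖x - y‖ ^ 2) ^ (t₁ / 2)) *
            ENNReal.ofReal ((1 + ‖y‖ ^ 2) ^ (t₂ / 2)))) *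
            ((‖f₁ (x - y)‖₊ : ℝ≥0∞) * (‖f₂ y‖₊ : ℝ≥0∞)) := by
          apply lintegral_mono
          intro y
          apply mul_le_mul_left
          calc ENNReal.ofReal ((1 + ‖x‖ ^ 2) ^ (-t₀ / 2))
              ≤ ENNReal.ofReal (2 ^ ((|t₀| + |t₁| + |t₂|) / 2) *
                  ((1 + ‖x - y‖ ^ 2) ^ (t₁ / 2) * (1 + ‖y‖ ^ 2) ^ (t₂ / 2))) :=
                ENNReal.ofReal_le_ofReal (weight_ineq ht01 ht02 ht12 x y)
            _ = C * (ENNReal.ofReal ((1 + ‖x - y‖ ^ 2) ^ (t₁ / 2)) *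
                  ENNReal.ofReal ((1 + ‖y‖ ^ 2) ^ (t₂ / 2))) := by
                rw [ENNReal.ofReal_mul hK.le, ENNReal.ofReal_mul (hw_pos _ _).le]
      _ = C * ∫⁻ y, F (x - y) * G y := by
          rw [← lintegral_const_mul' _ _ hC_ne]
          congr 1
          funext y
          rw [hFval, hGval]
          ring
  have hmain : wnorm (fun x => ∫ y, f₁ (x - y) * f₂ y) p₀' (-t₀) ≤
      C * (LN F p₁ * LN G p₂) := by
    have h1 : wnorm (fun x => ∫ y, f₁ (x - y) * f₂ y) p₀' (-t₀) =
        LN (fun x => (‖((1 + ‖x‖ ^ 2) ^ (-t₀ / 2) : ℝ) • (∫ y, f₁ (x - y) * f₂ y)‖₊ : ℝ≥0∞))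
          p₀' := by
      rw [wnorm, ← LN_nnnorm _ hp₀'0]
    rw [h1]
    calc LN (fun x => (‖((1 + ‖x‖ ^ 2) ^ (-t₀ / 2) : ℝ) • (∫ y, f₁ (x - y) * f₂ y)‖₊ : ℝ≥0∞)) p₀'
        ≤ LN (fun x => C * ∫⁻ y, F (x - y) * G y) p₀' := LN_mono hpoint p₀'
      _ = C * LN (fun x => ∫⁻ y, F (x - y) * G y) p₀' :=
          LN_const_mul _ hC_ne hp₀'0
      _ ≤ C * (LN F p₁ * LN G p₂) :=
          mul_le_mul_right (young F G hFm hGm hp₁ hp₂ hR) C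
  have h2 : LN F p₁ = wnorm f₁ p₁ t₁ := by
    rw [hF_def, LN_nnnorm g₁ hp₁0, wnorm, ← hg₁_def]
  have h3 : LN G p₂ = wnorm f₂ p₂ t₂ := by
    rw [hG_def, LN_nnnorm g₂ hp₂0, wnorm, ← hg₂_def]
  rw [h2, h3] at hmain
  exact hmain
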